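/- With h(x) the probability that a discrete-time random walk with step distribution p started at x never returns to 0, and v_1,v_2,v_3 independent with distribution p, one has E[h(v_2+v_3−v_1)] = (1 + 1/κ)·E[h(v_1)], where κ = 1/P(v_1+v_2 = 0). In coalescing-walk notation: p(v_1 | v_2+v_3) = (1+1/κ)·p(0|v_1). -/
import Mathlib


open scoped BigOperators

open Filter Topology

/-- `hitBy p n x` is the probability that the random walk on `ℤ^d` with step
distribution `p`, started at `x`, hits `0` within `n` steps. -/
noncomputable def hitBy {d : ℕ} (p : (Fin d → ℤ) → ℝ) : ℕ → (Fin d → ℤ) → ℝ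
  | 0, x => if x = 0 then 1 else 0
  | n + 1, x => if x = 0 then 1 else ∑' y, p y * hitBy p n (x + y)

section Aux

variable {d : ℕ} {p : (Fin d → ℤ) → ℝ}

lemma p_summable (hnonneg : ∀ x, 0 ≤ p x) (hsum : ∑' x, p x = 1) : Summable p := by
  by_contra hc
  rw [tsum_eq_zero_of_not_summable hc] at hsum
  exact one_ne_zero hsum.symm

lemma hitBy_mem (hnonneg : ∀ x, 0 ≤ p x) (hsum : ∑' x, p x = 1) :
    ∀ n x, 0 ≤ hitBy p n x ∧ hitBy p n x ≤ 1 := by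
  have hp := p_summable hnonneg hsum
  intro n
  induction n with
  | zero =>
    intro x
    simp only [hitBy]
    split <;> norm_num
  | succ n ih =>
    intro x
    simp only [hitBy]
    split
    · norm_num
    · refine ⟨tsum_nonneg fun y => mul_nonneg (hnonneg y) (ih _).1, ?_⟩
      calc ∑' y, p y * hitBy p n (x + y) ≤ ∑' y, p y := by
            refine Summable.tsum_le_tsum (fun y => mul_le_of_le_one_right (hnonneg y) (ih _).2)
              (hp.of_nonneg_of_le (fun y => mul_nonneg (hnonneg y) (ih _).1)
                (fun y => mul_le_of_le_one_right (hnonneg y) (ih _).2)) hp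
        _ = 1 := hsum

lemma hitBy_summable (hnonneg : ∀ x, 0 ≤ p x) (hsum : ∑' x, p x = 1) (n : ℕ)
    (x : Fin d → ℤ) : Summable fun y => p y * hitBy p n (x + y) :=
  (p_summable hnonneg hsum).of_nonneg_of_le
    (fun y => mul_nonneg (hnonneg y) (hitBy_mem hnonneg hsum n _).1)
    (fun y => mul_le_of_le_one_right (hnonneg y) (hitBy_mem hnonneg hsum n _).2)

lemma hitBy_mono (hnonneg : ∀ x, 0 ≤ p x) (hsum : ∑' x, p x = 1) :
    ∀ n (x : Fin d → ℤ), hitBy p n x ≤ hitBy p (n + 1) x := by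
  intro n
  induction n with
  | zero =>
    intro x
    simp only [hitBy]
    split
    · exact le_refl 1
    · exact tsum_nonneg fun y => mul_nonneg (hnonneg y) (hitBy_mem hnonneg hsum 0 _).1
  | succ n ih =>
    intro x
    show (if x = 0 then 1 else ∑' y, p y * hitBy p n (x + y))
        ≤ (if x = 0 then 1 else ∑' y, p y * hitBy p (n + 1) (x + y))
    split
    · exact le_refl 1
    · exact Summable.tsum_le_tsum (fun y => mul_le_mul_of_nonneg_left (ih _) (hnonneg y))
        (hitBy_summable hnonneg hsum n x) (hitBy_summable hnonneg hsum (n + 1) x)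

lemma hitBy_bddAbove (hnonneg : ∀ x, 0 ≤ p x) (hsum : ∑' x, p x = 1) (x : Fin d → ℤ) :
    BddAbove (Set.range fun n => hitBy p n x) := by
  refine ⟨1, ?_⟩
  rintro _ ⟨n, rfl⟩
  exact (hitBy_mem hnonneg hsum n x).2

lemma H_mem (hnonneg : ∀ x, 0 ≤ p x) (hsum : ∑' x, p x = 1) (x : Fin d → ℤ) :
    0 ≤ (⨆ n, hitBy p n x) ∧ (⨆ n, hitBy p n x) ≤ 1 :=
  ⟨(hitBy_mem hnonneg hsum 0 x).1.trans (le_ciSup (hitBy_bddAbove hnonneg hsum x) 0),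
    ciSup_le fun n => (hitBy_mem hnonneg hsum n x).2⟩

lemma H_zero : (⨆ n, hitBy p n (0 : Fin d → ℤ)) = 1 := by
  have : ∀ n, hitBy p n (0 : Fin d → ℤ) = 1 := by
    intro n; cases n <;> simp [hitBy]
  calc (⨆ n, hitBy p n (0 : Fin d → ℤ)) = ⨆ _ : ℕ, (1 : ℝ) := iSup_congr this
    _ = 1 := ciSup_const

lemma H_tendsto (hnonneg : ∀ x, 0 ≤ p x) (hsum : ∑' x, p x = 1) (x : Fin d → ℤ) :
    Tendsto (fun n => hitBy p n x) atTop (𝓝 (⨆ n, hitBy p n x)) :=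
  tendsto_atTop_ciSup (monotone_nat_of_le_succ fun n => hitBy_mono hnonneg hsum n x)
    (hitBy_bddAbove hnonneg hsum x)

set_option maxHeartbeats 1000000 in
lemma H_eq (hnonneg : ∀ x, 0 ≤ p x) (hsum : ∑' x, p x = 1) {x : Fin d → ℤ} (hx : x ≠ 0) :
    (⨆ n, hitBy p n x) = ∑' y, p y * ⨆ n, hitBy p n (x + y) := by
  have hp := p_summable hnonneg hsum
  have t1 : Tendsto (fun n => hitBy p (n + 1) x) atTop (𝓝 (⨆ n, hitBy p n x)) :=
    (H_tendsto hnonneg hsum x).comp (tendsto_add_atTop_nat 1)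
  have t2 : Tendsto (fun n => ∑' y, p y * hitBy p n (x + y)) atTop
      (𝓝 (∑' y, p y * ⨆ n, hitBy p n (x + y))) := by
    refine tendsto_tsum_of_dominated_convergence hp
      (fun y => (H_tendsto hnonneg hsum (x + y)).const_mul (p y)) ?_
    filter_upwards with n y
    rw [Real.norm_eq_abs,
      abs_of_nonneg (mul_nonneg (hnonneg y) (hitBy_mem hnonneg hsum n _).1)]
    exact mul_le_of_le_one_right (hnonneg y) (hitBy_mem hnonneg hsum n _).2
  have heq : (fun n => hitBy p (n + 1) x) = fun n => ∑' y, p y * hitBy p n (x + y) := by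
    funext n
    show (if x = 0 then 1 else ∑' y, p y * hitBy p n (x + y)) = _
    rw [if_neg hx]
  rw [heq] at t1
  exact tendsto_nhds_unique t1 t2

lemma H_summable (hnonneg : ∀ x, 0 ≤ p x) (hsum : ∑' x, p x = 1) (x : Fin d → ℤ) :
    Summable fun y => p y * ⨆ n, hitBy p n (x + y) :=
  (p_summable hnonneg hsum).of_nonneg_of_le
    (fun y => mul_nonneg (hnonneg y) (H_mem hnonneg hsum _).1)
    (fun y => mul_le_of_le_one_right (hnonneg y) (H_mem hnonneg hsum _).2)

end Aux

/-- **The identity `p(v₁ | v₂+v₃) = (1 + 1/κ)·p(0|v₁)`.**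
With `h(x)` the probability that the walk with step distribution `p` started at `x`
never hits `0`, and `v₁, v₂, v₃` independent with distribution `p`,
`E[h(v₂+v₃−v₁)] = (1 + 1/κ)·E[h(v₁)]`, where `κ = 1/P(v₁+v₂ = 0)`, i.e.
`1/κ = ∑ₓ p(x)p(−x)`. -/
theorem coalescence_three_step_identity
    {d : ℕ} (hd : 3 ≤ d) (p : (Fin d → ℤ) → ℝ)
    (hnonneg : ∀ x, 0 ≤ p x) (hsum : ∑' x, p x = 1)
    (hsymm : ∀ x, p (-x) = p x) (hzero : p 0 = 0)
    (htrans : ∑' x, p x * (⨆ n, hitBy p n x) < 1)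
    (h : (Fin d → ℤ) → ℝ)
    (hh : ∀ x, h x = 1 - ⨆ n, hitBy p n x)
    (κ : ℝ) (hret : 0 < ∑' x, p x * p (-x))
    (hκ : κ = (∑' x, p x * p (-x))⁻¹) :
    (∑' a, ∑' b, ∑' c, p a * p b * p c * h (b + c - a))
      = (1 + 1 / κ) * ∑' a, p a * h a := by
  classical
  have hp := p_summable hnonneg hsum
  have hh01 : ∀ x, 0 ≤ h x ∧ h x ≤ 1 := by
    intro x
    rw [hh]
    constructor
    · linarith [(H_mem hnonneg hsum x).2]
    · linarith [(H_mem hnonneg hsum x).1]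
  have hh0 : h 0 = 0 := by rw [hh, H_zero]; ring
  have hsummh : ∀ x : Fin d → ℤ, Summable fun y => p y * h (x + y) := fun x =>
    hp.of_nonneg_of_le (fun y => mul_nonneg (hnonneg y) (hh01 _).1)
      (fun y => mul_le_of_le_one_right (hnonneg y) (hh01 _).2)
  set S : ℝ := ∑' a, p a * h a with hSdef
  -- the key harmonicity identity for `h`
  have key : ∀ x : Fin d → ℤ, ∑' y, p y * h (x + y) = if x = 0 then S else h x := by
    intro x
    by_cases hx : x = 0
    · rw [if_pos hx, hSdef, hx]
      exact tsum_congr fun y => by rw [zero_add]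
    · rw [if_neg hx]
      have hptw : ∀ y, p y * h (x + y) = p y - p y * ⨆ n, hitBy p n (x + y) := by
        intro y; rw [hh]; ring
      rw [tsum_congr hptw, Summable.tsum_sub hp (H_summable hnonneg hsum x), hsum,
        ← H_eq hnonneg hsum hx, ← hh x]
  have ple1 : ∀ a, p a ≤ 1 := by
    intro a
    calc p a ≤ ∑' x, p x := Summable.le_tsum hp a fun b _ => hnonneg b
      _ = 1 := hsum
  -- innermost sum over c
  have step_c : ∀ a b : Fin d → ℤ, ∑' c, p a * p b * p c * h (b + c - a)
      = p a * p b * (if b - a = 0 then S else h (b - a)) := by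
    intro a b
    calc ∑' c, p a * p b * p c * h (b + c - a)
        = ∑' c, p a * p b * (p c * h (b - a + c)) := by
          refine tsum_congr fun c => ?_
          rw [show b + c - a = b - a + c by abel]; ring
      _ = p a * p b * ∑' c, p c * h (b - a + c) := tsum_mul_left
      _ = _ := by rw [key]
  -- sum over b
  have step_b : ∀ a : Fin d → ℤ,
      ∑' b, p a * p b * (if b - a = 0 then S else h (b - a))
        = p a * h (-a) + p a * p a * S := by
    intro a
    have hptw : ∀ b, p a * p b * (if b - a = 0 then S else h (b - a))
        = p a * (p b * h (b - a)) + p a * (if b = a then p a * S else 0) := by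
      intro b
      by_cases hb : b = a
      · subst hb
        rw [if_pos (sub_self b), if_pos rfl, sub_self, hh0]
        ring
      · rw [if_neg (sub_ne_zero.mpr hb), if_neg hb]
        ring
    have hs1 : Summable fun b => p b * h (b - a) := by
      have := hsummh (-a)
      refine this.congr fun b => ?_
      rw [show -a + b = b - a by abel]
    have hs2 : Summable fun b : Fin d → ℤ => (if b = a then p a * S else 0) := by
      refine summable_of_ne_finset_zero (s := {a}) fun b hb => ?_
      rw [if_neg (by simpa using hb)]
    rw [tsum_congr hptw, Summable.tsum_add (hs1.mul_left _) (hs2.mul_left _),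
      tsum_mul_left, tsum_mul_left, tsum_ite_eq]
    have h1 : ∑' b, p b * h (b - a) = if a = 0 then S else h (-a) := by
      rw [show (fun b => p b * h (b - a)) = fun b => p b * h (-a + b) by
        funext b; rw [show -a + b = b - a by abel]]
      rw [key (-a)]
      simp only [neg_eq_zero]
    rw [h1]
    by_cases ha : a = 0
    · subst ha; rw [hzero]; simp
    · rw [if_neg ha]; ring
  -- sum over a
  have hs3 : Summable fun a => p a * h (-a) :=
    hp.of_nonneg_of_le (fun a => mul_nonneg (hnonneg a) (hh01 _).1)
      (fun a => mul_le_of_le_one_right (hnonneg a) (hh01 _).2)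
  have hs4 : Summable fun a => p a * p a :=
    hp.of_nonneg_of_le (fun a => mul_nonneg (hnonneg a) (hnonneg a))
      (fun a => mul_le_of_le_one_right (hnonneg a) (ple1 a))
  have hnegsum : ∑' a, p a * h (-a) = S := by
    calc ∑' a, p a * h (-a) = ∑' a, p (-a) * h (-a) := tsum_congr fun a => by rw [hsymm]
      _ = S := (Equiv.neg (Fin d → ℤ)).tsum_eq fun a => p a * h a
  have hqsum : ∑' a, p a * p a = ∑' x, p x * p (-x) :=
    tsum_congr fun a => by rw [hsymm]
  calc (∑' a, ∑' b, ∑' c, p a * p b * p c * h (b + c - a))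
      = ∑' a, (p a * h (-a) + p a * p a * S) := by
        refine tsum_congr fun a => ?_
        rw [tsum_congr (step_c a), step_b a]
    _ = ∑' a, p a * h (-a) + (∑' a, p a * p a) * S := by
        rw [Summable.tsum_add hs3 (hs4.mul_right S), tsum_mul_right]
    _ = S + (∑' x, p x * p (-x)) * S := by rw [hnegsum, hqsum]
    _ = (1 + 1 / κ) * S := by
        rw [hκ, one_div, inv_inv]; ring
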